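/- Let G be a finite simple graph with vertex set V and let W : V×V → [0,∞) be a symmetric weight function with W_{uv} > 0 only if {u,v} is an edge of G. Let {x,y} be an edge with weighted degrees d_x(W) = ∑_u W_{xu} > 0 and d_y(W) > 0, write p_{x,W}(z) = W_{xz}/d_x(W), and define the overlap Ov_{xy}(W) = p_{x,W}(y) + p_{y,W}(x) + ∑_{z ∈ Γ(x)∩Γ(y)} min{p_{x,W}(z), p_{y,W}(z)}. For α ∈ [1/2, 1), let m^α_{x,W} be the probability measure with m^α_{x,W}(x) = α and m^α_{x,W}(z) = (1−α)·p_{x,W}(z) for z ∈ Γ(x), and similarly m^α_{y,W}. Then: (i) ∑_{u ∈ V} min{m^α_{x,W}(u), m^α_{y,W}(u)} = (1−α)·Ov_{xy}(W); and (ii) every coupling of m^α_{x,W} and m^α_{y,W} has transport cost at least 1 − (1−α)·Ov_{xy}(W). -/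
import Mathlib


open Finset

namespace WeightedCurv

variable {V : Type*} [Fintype V] [DecidableEq V]

/-- Weighted degree. -/
noncomputable def dW (W : V → V → ℝ) (x : V) : ℝ := ∑ u, W x u

/-- Neighbour distribution at `x` induced by the weights `W`. -/
noncomputable def pW (W : V → V → ℝ) (x z : V) : ℝ := W x z / dW W x

/-- The `α`-lazy measure at `x` with weights `W`. -/
noncomputable def lazyW (W : V → V → ℝ) (α : ℝ) (x : V) : V → ℝ :=
  fun v => if v = x then α else (1 - α) * pW W x v

/-- The overlap functional of an edge `{x,y}`. -/
noncomputable def Ov (G : SimpleGraph V) [DecidableRel G.Adj] (W : V → V → ℝ) (x y : V) : ℝ :=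
  pW W x y + pW W y x +
    ∑ z ∈ G.neighborFinset x ∩ G.neighborFinset y, min (pW W x z) (pW W y z)

/-- `cpl` is a coupling of the measures `m1` and `m2` on `V`. -/
def IsCoupling (cpl : V × V → ℝ) (m1 m2 : V → ℝ) : Prop :=
  (∀ p, 0 ≤ cpl p) ∧ (∀ u, ∑ v, cpl (u, v) = m1 u) ∧ (∀ v, ∑ u, cpl (u, v) = m2 v)

/-- Transport cost of `cpl` with respect to the graph distance of `G`. -/
noncomputable def cost (G : SimpleGraph V) (cpl : V × V → ℝ) : ℝ :=
  ∑ p : V × V, cpl p * (G.dist p.1 p.2 : ℝ)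


/-- Deterministic overlap upper bound.
For a symmetric nonnegative weight `W` supported on the edges of `G`, an edge `{x,y}` with
positive weighted degrees, and `α ∈ [1/2,1)`: (i) the total overlap of the lazy measures equals
`(1−α)·Ov_{xy}(W)`; and (ii) every coupling of the lazy measures has transport cost at least
`1 − (1−α)·Ov_{xy}(W)`. -/
lemma pW_nonneg (W : V → V → ℝ) (hnn : ∀ u v, 0 ≤ W u v) (x z : V) : 0 ≤ pW W x z :=
  div_nonneg (hnn x z) (Finset.sum_nonneg fun u _ => hnn x u)

lemma pW_le_one (W : V → V → ℝ) (hnn : ∀ u v, 0 ≤ W u v) (x z : V) (hdx : 0 < dW W x) :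
    pW W x z ≤ 1 :=
  (div_le_one hdx).2 (Finset.single_le_sum (fun u _ => hnn x u) (Finset.mem_univ z))

lemma sum_pW (W : V → V → ℝ) (x : V) (hdx : 0 < dW W x) : ∑ z, pW W x z = 1 := by
  unfold pW
  rw [← Finset.sum_div]
  exact div_self hdx.ne'

lemma sum_lazyW (W : V → V → ℝ) (α : ℝ) (x : V) (hdx : 0 < dW W x) (hxx : pW W x x = 0) :
    ∑ u, lazyW W α x u = 1 := by
  have h : ∀ u, lazyW W α x u = (if u = x then α else 0) + (1 - α) * pW W x u := by
    intro u
    unfold lazyW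
    split_ifs with h
    · rw [h, hxx]; ring
    · ring
  simp_rw [h]
  rw [Finset.sum_add_distrib, ← Finset.mul_sum, sum_pW W x hdx]
  simp

theorem overlap_upper_bound
    (G : SimpleGraph V) [DecidableRel G.Adj] (W : V → V → ℝ)
    (hsymm : ∀ u v, W u v = W v u) (hnn : ∀ u v, 0 ≤ W u v)
    (hsupp : ∀ u v, W u v ≠ 0 → G.Adj u v)
    (x y : V) (hxy : G.Adj x y) (hdx : 0 < dW W x) (hdy : 0 < dW W y)
    (α : ℝ) (hα2 : 1/2 ≤ α) (hα1 : α < 1) :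
    (∑ u, min (lazyW W α x u) (lazyW W α y u) = (1 - α) * Ov G W x y)
    ∧ (∀ cpl : V × V → ℝ, IsCoupling cpl (lazyW W α x) (lazyW W α y) →
        1 - (1 - α) * Ov G W x y ≤ cost G cpl) := by
  have hne : x ≠ y := hxy.ne
  have hWz : ∀ u v : V, ¬ G.Adj u v → W u v = 0 := by
    intro u v h
    by_contra hw
    exact h (hsupp u v hw)
  have hpz : ∀ u v : V, ¬ G.Adj u v → pW W u v = 0 := by
    intro u v h
    unfold pW
    rw [hWz u v h, zero_div]
  have h1α : (0:ℝ) ≤ 1 - α := by linarith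
  -- the per-vertex evaluations of the min
  have hfx : min (lazyW W α x x) (lazyW W α y x) = (1 - α) * pW W y x := by
    have h1 : lazyW W α x x = α := by simp [lazyW]
    have h2 : lazyW W α y x = (1 - α) * pW W y x := by simp [lazyW, hne]
    rw [h1, h2]
    refine min_eq_right ?_
    have := pW_le_one W hnn y x hdy
    nlinarith [pW_nonneg W hnn y x]
  have hfy : min (lazyW W α x y) (lazyW W α y y) = (1 - α) * pW W x y := by
    have h1 : lazyW W α y y = α := by simp [lazyW]
    have h2 : lazyW W α x y = (1 - α) * pW W x y := by simp [lazyW, hne.symm]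
    rw [h1, h2]
    refine min_eq_left ?_
    have := pW_le_one W hnn x y hdx
    nlinarith [pW_nonneg W hnn x y]
  have hfz : ∀ u : V, u ≠ x → u ≠ y →
      min (lazyW W α x u) (lazyW W α y u) = (1 - α) * min (pW W x u) (pW W y u) := by
    intro u hux huy
    have h1 : lazyW W α x u = (1 - α) * pW W x u := by simp [lazyW, hux]
    have h2 : lazyW W α y u = (1 - α) * pW W y u := by simp [lazyW, huy]
    rw [h1, h2, mul_min_of_nonneg _ _ h1α]
  -- part (i)
  have part1 : ∑ u, min (lazyW W α x u) (lazyW W α y u) = (1 - α) * Ov G W x y := by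
    rw [← Finset.sum_add_sum_compl ({x, y} : Finset V)]
    have hpair : ∑ u ∈ ({x, y} : Finset V), min (lazyW W α x u) (lazyW W α y u)
        = (1 - α) * pW W y x + (1 - α) * pW W x y := by
      rw [Finset.sum_pair hne, hfx, hfy]
    have hrest : ∑ u ∈ ({x, y} : Finset V)ᶜ, min (lazyW W α x u) (lazyW W α y u)
        = (1 - α) * ∑ z ∈ G.neighborFinset x ∩ G.neighborFinset y,
            min (pW W x z) (pW W y z) := by
      rw [Finset.mul_sum]
      rw [← Finset.sum_subset (s₁ := G.neighborFinset x ∩ G.neighborFinset y)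
        (s₂ := ({x, y} : Finset V)ᶜ) ?_ ?_]
      · refine Finset.sum_congr rfl ?_
        intro u hu
        simp only [Finset.mem_inter, SimpleGraph.mem_neighborFinset] at hu
        have hux : u ≠ x := fun h => G.irrefl (h ▸ hu.1)
        have huy : u ≠ y := fun h => G.irrefl (h ▸ hu.2)
        exact hfz u hux huy
      · intro u hu
        simp only [Finset.mem_inter, SimpleGraph.mem_neighborFinset] at hu
        simp only [Finset.mem_compl, Finset.mem_insert, Finset.mem_singleton, not_or]
        exact ⟨fun h => G.irrefl (h ▸ hu.1), fun h => G.irrefl (h ▸ hu.2)⟩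
      · intro u hu hu'
        simp only [Finset.mem_compl, Finset.mem_insert, Finset.mem_singleton, not_or] at hu
        rw [hfz u hu.1 hu.2]
        simp only [Finset.mem_inter, SimpleGraph.mem_neighborFinset, not_and_or] at hu'
        rcases hu' with h | h
        · rw [hpz x u h, min_eq_left (pW_nonneg W hnn y u), mul_zero]
        · rw [hpz y u h, min_eq_right (pW_nonneg W hnn x u), mul_zero]
    rw [hpair, hrest, Ov]
    ring
  refine ⟨part1, ?_⟩
  -- part (ii)
  intro cpl hcpl
  obtain ⟨hpos, hm1, hm2⟩ := hcpl
  have hxx0 : pW W x x = 0 := hpz x x (G.irrefl)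
  have hyy0 : pW W y y = 0 := hpz y y (G.irrefl)
  have htotal : ∑ p : V × V, cpl p = 1 := by
    rw [Fintype.sum_prod_type]
    simp_rw [hm1]
    exact sum_lazyW W α x hdx hxx0
  -- diagonal entries are bounded by the min of the marginals
  have hdiag : ∀ u : V, cpl (u, u) ≤ min (lazyW W α x u) (lazyW W α y u) := by
    intro u
    refine le_min ?_ ?_
    · rw [← hm1 u]
      exact Finset.single_le_sum (fun v _ => hpos (u, v)) (Finset.mem_univ u)
    · rw [← hm2 u]
      exact Finset.single_le_sum (fun v _ => hpos (v, u)) (Finset.mem_univ u)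
  -- reachability of charged pairs
  have hreach : ∀ u v : V, cpl (u, v) ≠ 0 → G.Reachable u v := by
    intro u v hc
    have hmu : lazyW W α x u ≠ 0 := by
      intro h
      have h1 : cpl (u, v) ≤ lazyW W α x u := by
        rw [← hm1 u]
        exact Finset.single_le_sum (fun w _ => hpos (u, w)) (Finset.mem_univ v)
      have h2 := hpos (u, v)
      exact hc (le_antisymm (h ▸ h1) h2)
    have hmv : lazyW W α y v ≠ 0 := by
      intro h
      have h1 : cpl (u, v) ≤ lazyW W α y v := by
        rw [← hm2 v]
        exact Finset.single_le_sum (fun w _ => hpos (w, v)) (Finset.mem_univ u)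
      have h2 := hpos (u, v)
      exact hc (le_antisymm (h ▸ h1) h2)
    have hux : G.Reachable u x := by
      by_cases h : u = x
      · rw [h]
      · have : pW W x u ≠ 0 := by
          intro h0
          apply hmu
          simp [lazyW, h, h0]
        have : W x u ≠ 0 := by
          intro h0
          apply this
          unfold pW
          rw [h0, zero_div]
        exact (hsupp x u this).reachable.symm
    have hvy : G.Reachable v y := by
      by_cases h : v = y
      · rw [h]
      · have : pW W y v ≠ 0 := by
          intro h0
          apply hmv
          simp [lazyW, h, h0]
        have : W y v ≠ 0 := by
          intro h0
          apply this
          unfold pW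
          rw [h0, zero_div]
        exact (hsupp y v this).reachable.symm
    exact hux.trans (hxy.reachable.trans hvy.symm)
  -- pointwise bound on the cost summand
  have hpt : ∀ p : V × V, cpl p - (if p.1 = p.2 then cpl p else 0)
      ≤ cpl p * (G.dist p.1 p.2 : ℝ) := by
    rintro ⟨u, v⟩
    by_cases h : u = v
    · subst h
      simp [SimpleGraph.dist_self]
    · rw [if_neg h, sub_zero]
      by_cases hc : cpl (u, v) = 0
      · rw [hc, zero_mul]
      · have hd : 1 ≤ G.dist u v := (hreach u v hc).pos_dist_of_ne h
        have : (1:ℝ) ≤ (G.dist u v : ℝ) := by exact_mod_cast hd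
        nlinarith [hpos (u, v)]
  have hsum : ∑ p : V × V, (cpl p - (if p.1 = p.2 then cpl p else 0))
      ≤ ∑ p : V × V, cpl p * (G.dist p.1 p.2 : ℝ) := Finset.sum_le_sum (fun p _ => hpt p)
  have hsumdiag : ∑ p : V × V, (if p.1 = p.2 then cpl p else 0) = ∑ u : V, cpl (u, u) := by
    rw [Fintype.sum_prod_type]
    refine Finset.sum_congr rfl ?_
    intro u _
    simp
  have hmin : ∑ u : V, cpl (u, u) ≤ (1 - α) * Ov G W x y := by
    rw [← part1]
    exact Finset.sum_le_sum fun u _ => hdiag u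
  calc 1 - (1 - α) * Ov G W x y ≤ ∑ p : V × V, cpl p - ∑ u : V, cpl (u, u) := by
        rw [htotal]; linarith
    _ = ∑ p : V × V, (cpl p - (if p.1 = p.2 then cpl p else 0)) := by
        rw [Finset.sum_sub_distrib, hsumdiag]
    _ ≤ ∑ p : V × V, cpl p * (G.dist p.1 p.2 : ℝ) := hsum
    _ = cost G cpl := rfl


end WeightedCurv
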